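/- The square root of H_g defines a metric on the cone: d((x,r),(y,s)) = √(r + s − 2√(rs)·e^{−|x−y|²/2}) satisfies the triangle inequality on the quotient of ℝ × [0,∞) where all points (x,0) are identified. -/

import Mathlib

/-- The cone cost `H_g(x, r; y, s) = r + s − 2√(rs)·e^{−|x−y|²/2}`. -/
noncomputable def Hg (x r y s : ℝ) : ℝ :=
  r + s - 2 * Real.sqrt (r * s) * Real.exp (-(|x - y| ^ 2) / 2)

-- scalar squared inequality
lemma sq_ineq (a b : ℝ) (ha : 0 ≤ a) (hb : 0 ≤ b) :
    Real.exp (-(a^2)) * Real.exp (-(b^2)) * (1 - Real.exp (-(a*b)))^2 ≤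
      (1 - Real.exp (-(a^2))) * (1 - Real.exp (-(b^2))) := by
  have hab : 0 ≤ a * b := mul_nonneg ha hb
  have h1 : 0 ≤ 1 - Real.exp (-(a*b)) := by
    have := Real.exp_le_one_iff.mpr (neg_nonpos.mpr hab)
    linarith
  have h2 : 1 - Real.exp (-(a*b)) ≤ a*b := by
    have := Real.add_one_le_exp (-(a*b)); linarith
  have h3 : (1 - Real.exp (-(a*b)))^2 ≤ (a*b)^2 := by nlinarith
  have h4 : a^2 ≤ Real.exp (a^2) - 1 := by have := Real.add_one_le_exp (a^2); linarith
  have h5 : b^2 ≤ Real.exp (b^2) - 1 := by have := Real.add_one_le_exp (b^2); linarith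
  have e1 : Real.exp (-(a^2)) * Real.exp (a^2) = 1 := by
    rw [← Real.exp_add]; simp
  have e2 : Real.exp (-(b^2)) * Real.exp (b^2) = 1 := by
    rw [← Real.exp_add]; simp
  have p1 : 0 < Real.exp (-(a^2)) := Real.exp_pos _
  have p2 : 0 < Real.exp (-(b^2)) := Real.exp_pos _
  nlinarith [mul_le_mul h4 h5 (by positivity) (by nlinarith), mul_pos p1 p2,
    sq_nonneg (a*b)]

-- cos(θ₁+θ₂) ≤ kernel at a+b
lemma cos_bound (a b : ℝ) (ha : 0 ≤ a) (hb : 0 ≤ b) :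
    Real.exp (-(a^2)/2) * Real.exp (-(b^2)/2) -
      Real.sqrt (1 - Real.exp (-(a^2)/2)^2) * Real.sqrt (1 - Real.exp (-(b^2)/2)^2) ≤
      Real.exp (-((a+b)^2)/2) := by
  set c1 := Real.exp (-(a^2)/2) with hc1
  set c2 := Real.exp (-(b^2)/2) with hc2
  have hc1sq : c1^2 = Real.exp (-(a^2)) := by
    rw [hc1, sq, ← Real.exp_add]; ring_nf
  have hc2sq : c2^2 = Real.exp (-(b^2)) := by
    rw [hc2, sq, ← Real.exp_add]; ring_nf
  have key : c1 * c2 - Real.exp (-((a+b)^2)/2) = c1 * c2 * (1 - Real.exp (-(a*b))) := by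
    have h : -((a+b)^2)/2 = (-(a^2)/2 + -(b^2)/2) + -(a*b) := by ring
    rw [hc1, hc2, h, Real.exp_add, ← Real.exp_add]; ring
  have hab : 0 ≤ a * b := mul_nonneg ha hb
  have hexpab : Real.exp (-(a*b)) ≤ 1 := Real.exp_le_one_iff.mpr (neg_nonpos.mpr hab)
  have hc1pos : 0 < c1 := Real.exp_pos _
  have hc2pos : 0 < c2 := Real.exp_pos _
  have hL : 0 ≤ c1 * c2 * (1 - Real.exp (-(a*b))) := by
    have : 0 ≤ 1 - Real.exp (-(a*b)) := by linarith
    positivity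
  have hc1le : c1^2 ≤ 1 := by
    rw [hc1sq]; exact Real.exp_le_one_iff.mpr (by nlinarith [sq_nonneg a])
  have hc2le : c2^2 ≤ 1 := by
    rw [hc2sq]; exact Real.exp_le_one_iff.mpr (by nlinarith [sq_nonneg b])
  have hmul : Real.sqrt (1 - c1^2) * Real.sqrt (1 - c2^2)
      = Real.sqrt ((1 - c1^2) * (1 - c2^2)) := (Real.sqrt_mul (by linarith) _).symm
  have hsq : (c1 * c2 * (1 - Real.exp (-(a*b))))^2 ≤ (1 - c1^2) * (1 - c2^2) := by
    have := sq_ineq a b ha hb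
    rw [hc1sq, hc2sq]
    calc (c1 * c2 * (1 - Real.exp (-(a*b))))^2
        = c1^2 * c2^2 * (1 - Real.exp (-(a*b)))^2 := by ring
      _ ≤ _ := by rw [hc1sq, hc2sq]; exact this
  have : c1 * c2 * (1 - Real.exp (-(a*b))) ≤ Real.sqrt ((1 - c1^2) * (1 - c2^2)) :=
    (Real.le_sqrt hL (mul_nonneg (by linarith) (by linarith))).mpr hsq
  rw [hmul]
  linarith [key, this]

lemma normSq_diff (t v c1 s1 c2 s2 : ℝ) (ht : 0 ≤ t) (hv : 0 ≤ v)
    (h1 : c1^2 + s1^2 = 1) (h2 : c2^2 + s2^2 = 1) :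
    Complex.normSq (⟨Real.sqrt t * c1, Real.sqrt t * s1⟩ - ⟨Real.sqrt v * c2, Real.sqrt v * s2⟩) =
      t + v - 2 * Real.sqrt (t * v) * (c1 * c2 + s1 * s2) := by
  have h3 : Real.sqrt t ^ 2 = t := Real.sq_sqrt ht
  have h4 : Real.sqrt v ^ 2 = v := Real.sq_sqrt hv
  have h5 : Real.sqrt t * Real.sqrt v = Real.sqrt (t * v) := (Real.sqrt_mul ht v).symm
  simp only [Complex.normSq_apply, Complex.sub_re, Complex.sub_im]
  have key : (Real.sqrt t * c1 - Real.sqrt v * c2) * (Real.sqrt t * c1 - Real.sqrt v * c2)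
        + (Real.sqrt t * s1 - Real.sqrt v * s2) * (Real.sqrt t * s1 - Real.sqrt v * s2)
      = Real.sqrt t ^ 2 * (c1^2 + s1^2) + Real.sqrt v ^ 2 * (c2^2 + s2^2)
        - 2 * (Real.sqrt t * Real.sqrt v) * (c1 * c2 + s1 * s2) := by ring
  rw [key, h1, h2, h3, h4, h5]; ring

set_option maxHeartbeats 2000000 in
/-- `√H_g` satisfies the triangle inequality on the cone over `ℝ`
(equivalently on the quotient of `ℝ × [0,∞)` identifying all points `(x, 0)`,
on which `√H_g` is well defined since it vanishes on pairs of apex points). -/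
theorem sqrt_Hg_triangle (x y z r s u : ℝ) (hr : 0 ≤ r) (hs : 0 ≤ s) (hu : 0 ≤ u) :
    Real.sqrt (Hg x r z u) ≤ Real.sqrt (Hg x r y s) + Real.sqrt (Hg y s z u) := by
  have ha : (0:ℝ) ≤ |x - y| := abs_nonneg _
  have hb : (0:ℝ) ≤ |y - z| := abs_nonneg _
  set c1 := Real.exp (-(|x - y|^2)/2) with hc1
  set c2 := Real.exp (-(|y - z|^2)/2) with hc2
  set c3 := Real.exp (-(|x - z|^2)/2) with hc3
  set s1 := Real.sqrt (1 - c1^2) with hs1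
  set s2 := Real.sqrt (1 - c2^2) with hs2
  have hc1pos : 0 < c1 := Real.exp_pos _
  have hc2pos : 0 < c2 := Real.exp_pos _
  have hc1le : c1 ≤ 1 := Real.exp_le_one_iff.mpr (by nlinarith [sq_nonneg |x - y|])
  have hc2le : c2 ≤ 1 := Real.exp_le_one_iff.mpr (by nlinarith [sq_nonneg |y - z|])
  have h1 : c1^2 + s1^2 = 1 := by
    rw [hs1, Real.sq_sqrt (by nlinarith)]; ring
  have h2 : c2^2 + s2^2 = 1 := by
    rw [hs2, Real.sq_sqrt (by nlinarith)]; ring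
  have hs1n : 0 ≤ s1 := Real.sqrt_nonneg _
  have hs2n : 0 ≤ s2 := Real.sqrt_nonneg _
  have h3 : (c1*c2 - s1*s2)^2 + (s1*c2 + c1*s2)^2 = 1 := by nlinarith [h1, h2]
  -- the Hg values in terms of c1, c2, c3
  have hgxy : Hg x r y s = r + s - 2 * Real.sqrt (r*s) * c1 := by rw [Hg, hc1]
  have hgyz : Hg y s z u = s + u - 2 * Real.sqrt (s*u) * c2 := by rw [Hg, hc2]
  have hgxz : Hg x r z u = r + u - 2 * Real.sqrt (r*u) * c3 := by rw [Hg, hc3]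
  -- key angle inequality: c1*c2 - s1*s2 ≤ c3
  have hkey : c1*c2 - s1*s2 ≤ c3 := by
    have htri : |x - z| ≤ |x - y| + |y - z| := abs_sub_le x y z
    have hsq : |x - z|^2 ≤ (|x - y| + |y - z|)^2 := by
      have := abs_nonneg (x-z); nlinarith
    have hmono : Real.exp (-((|x - y| + |y - z|)^2)/2) ≤ c3 := by
      rw [hc3]; exact Real.exp_le_exp.mpr (by linarith)
    have hcb := cos_bound |x - y| |y - z| ha hb
    rw [← hc1, ← hc2, ← hs1, ← hs2] at hcb
    exact hcb.trans hmono
  -- three points in the plane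
  set P : ℂ := ⟨Real.sqrt r * 1, Real.sqrt r * 0⟩ with hP
  set Q : ℂ := ⟨Real.sqrt s * c1, Real.sqrt s * s1⟩ with hQ
  set W : ℂ := ⟨Real.sqrt u * (c1*c2 - s1*s2), Real.sqrt u * (s1*c2 + c1*s2)⟩ with hW
  have hPQ : Complex.normSq (P - Q) = Hg x r y s := by
    rw [hP, hQ, normSq_diff r s 1 0 c1 s1 hr hs (by norm_num) h1, hgxy]; ring
  have hQW : Complex.normSq (Q - W) = Hg y s z u := by
    rw [hQ, hW, normSq_diff s u c1 s1 (c1*c2 - s1*s2) (s1*c2 + c1*s2) hs hu h1 h3, hgyz]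
    have he : c1 * (c1*c2 - s1*s2) + s1 * (s1*c2 + c1*s2) = c2 * (c1^2 + s1^2) := by ring
    rw [he, h1]; ring
  have hPW : Hg x r z u ≤ Complex.normSq (P - W) := by
    rw [hP, hW, normSq_diff r u 1 0 (c1*c2 - s1*s2) (s1*c2 + c1*s2) hr hu (by norm_num) h3, hgxz]
    have hru : 0 ≤ Real.sqrt (r * u) := Real.sqrt_nonneg _
    have hmul : Real.sqrt (r*u) * (c1*c2 - s1*s2) ≤ Real.sqrt (r*u) * c3 :=
      mul_le_mul_of_nonneg_left hkey hru
    nlinarith [hmul]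
  calc Real.sqrt (Hg x r z u) ≤ Real.sqrt (Complex.normSq (P - W)) :=
        Real.sqrt_le_sqrt hPW
    _ = ‖P - W‖ := by rw [Complex.norm_def]
    _ ≤ ‖P - Q‖ + ‖Q - W‖ := norm_sub_le_norm_sub_add_norm_sub P Q W
    _ = Real.sqrt (Hg x r y s) + Real.sqrt (Hg y s z u) := by
        rw [Complex.norm_def, Complex.norm_def, hPQ, hQW]
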